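/- Let (A, B) be a real matrix pair with A ∈ ℝ^{n×n} and B ∈ ℝ^{n×r} that is controllable with controllability index m. Then for each real matrix M ∈ ℝ^{n×n}, the matrix pair (M + gA, B) is controllable with controllability index no greater than m for all but at most finitely many values of the real scalar g. -/
import Mathlib


open Matrix Finset

/-- The controllability matrix `[B, AB, …, A^{k-1}B]` of the pair `(A, B)`. -/
def ctrbMat {ι κ : Type*} [Fintype ι] [DecidableEq ι]
    (A : Matrix ι ι ℝ) (B : Matrix ι κ ℝ) (k : ℕ) : Matrix ι (Fin k × κ) ℝ :=
  Matrix.of fun i p => ((A ^ (p.1 : ℕ)) * B) i p.2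

/-- `(A, B)` is controllable if its controllability matrix has full rank. -/
def Controllable {ι κ : Type*} [Fintype ι] [DecidableEq ι] [Fintype κ]
    (A : Matrix ι ι ℝ) (B : Matrix ι κ ℝ) : Prop :=
  (ctrbMat A B (Fintype.card ι)).rank = Fintype.card ι

/-- The controllability index: the smallest positive `k` with
`rank [B, AB, …, A^{k-1}B]` full. -/
noncomputable def ctrlIndex {ι κ : Type*} [Fintype ι] [DecidableEq ι] [Fintype κ]
    (A : Matrix ι ι ℝ) (B : Matrix ι κ ℝ) : ℕ :=
  sInf {k | 0 < k ∧ (ctrbMat A B k).rank = Fintype.card ι}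

/-- `(C, A)` is observable iff `(Aᵀ, Cᵀ)` is controllable. -/
def Observable {ι κ : Type*} [Fintype ι] [DecidableEq ι] [Fintype κ]
    (C : Matrix κ ι ℝ) (A : Matrix ι ι ℝ) : Prop :=
  Controllable Aᵀ Cᵀ

/-- **Lemma 5, first part.** If `(A, B)` is controllable with
controllability index `m`, then for each real matrix `M`, the pair `(M + gA, B)`
is controllable with controllability index no greater than `m` for all but at
most finitely many real scalars `g`. -/
-- auxiliary lemmas

lemma aux_rank_zero_height {ι : Type*} [Fintype ι] (X : Matrix (Fin 0) ι ℝ) :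
    X.rank = 0 := by
  have := X.rank_le_card_height
  simpa using this

lemma aux_det_ne_zero_of_rank {k : ℕ} (G : Matrix (Fin k) (Fin k) ℝ)
    (h : G.rank = k) : G.det ≠ 0 := by
  intro h0
  obtain ⟨v, hv, hmv⟩ := (Matrix.exists_mulVec_eq_zero_iff).mpr h0
  have hker : 0 < Module.finrank ℝ (LinearMap.ker G.mulVecLin) := by
    rw [Module.finrank_pos_iff_exists_ne_zero]
    refine ⟨⟨v, hmv⟩, fun h => hv ?_⟩
    simpa [Subtype.ext_iff] using h
  have hrn := LinearMap.finrank_range_add_finrank_ker G.mulVecLin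
  rw [Module.finrank_fintype_fun_eq_card, Fintype.card_fin] at hrn
  have : G.rank + Module.finrank ℝ (LinearMap.ker G.mulVecLin) = k := hrn
  omega

lemma aux_rank_of_det_ne_zero {k : ℕ} (G : Matrix (Fin k) (Fin k) ℝ)
    (h : G.det ≠ 0) : G.rank = k := by
  have := Matrix.rank_of_isUnit G (G.isUnit_iff_isUnit_det.mpr (isUnit_iff_ne_zero.mpr h))
  simpa using this

lemma aux_rank_ctrb_mono {n r : ℕ} (X : Matrix (Fin n) (Fin n) ℝ)
    (B : Matrix (Fin n) (Fin r) ℝ) {k l : ℕ} (h : k ≤ l) :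
    (ctrbMat X B k).rank ≤ (ctrbMat X B l).rank := by
  have heq : ctrbMat X B k = ctrbMat X B l *
      (Matrix.of fun (q : Fin l × Fin r) (p : Fin k × Fin r) =>
        if q = ((Fin.castLE h p.1), p.2) then (1 : ℝ) else 0) := by
    ext i p
    rw [Matrix.mul_apply]
    simp only [Matrix.of_apply, mul_ite, mul_one, mul_zero]
    rw [Finset.sum_ite_eq' Finset.univ ((Fin.castLE h p.1), p.2)]
    simp [ctrbMat]
  rw [heq]
  exact Matrix.rank_mul_le_left _ _

lemma aux_rank_ctrb_smul {n r : ℕ} (X : Matrix (Fin n) (Fin n) ℝ)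
    (B : Matrix (Fin n) (Fin r) ℝ) (k : ℕ) {c : ℝ} (hc : c ≠ 0) :
    (ctrbMat (c • X) B k).rank = (ctrbMat X B k).rank := by
  have heq : ctrbMat (c • X) B k =
      ctrbMat X B k * Matrix.diagonal (fun p : Fin k × Fin r => c ^ (p.1 : ℕ)) := by
    ext i p
    rw [Matrix.mul_diagonal]
    simp [ctrbMat, smul_pow, Matrix.smul_mul, mul_comm]
  rw [heq]
  apply Matrix.rank_mul_eq_left_of_isUnit_det
  rw [Matrix.det_diagonal]
  exact isUnit_iff_ne_zero.mpr (Finset.prod_ne_zero_iff.mpr fun p _ => pow_ne_zero _ hc)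


theorem controllable_perturbation
    {n r : ℕ} (A : Matrix (Fin n) (Fin n) ℝ) (B : Matrix (Fin n) (Fin r) ℝ)
    (m : ℕ)
    (hc : Controllable A B) (hidx : ctrlIndex A B = m)
    (M : Matrix (Fin n) (Fin n) ℝ) :
    {g : ℝ | ¬ (Controllable (M + g • A) B ∧ ctrlIndex (M + g • A) B ≤ m)}.Finite := by
  classical
  -- the set defining the controllability index of (A,B)
  have hSne : {k | 0 < k ∧ (ctrbMat A B k).rank = Fintype.card (Fin n)}.Nonempty := by
    rcases Nat.eq_zero_or_pos n with h0 | hpos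
    · refine ⟨1, one_pos, ?_⟩
      subst h0
      exact aux_rank_zero_height _
    · refine ⟨n, by simpa using hpos, ?_⟩
      have hc' : (ctrbMat A B (Fintype.card (Fin n))).rank = Fintype.card (Fin n) := hc
      rw [Fintype.card_fin] at hc'
      rw [Fintype.card_fin]
      exact hc'
  have hm := Nat.sInf_mem hSne
  rw [show sInf {k | 0 < k ∧ (ctrbMat A B k).rank = Fintype.card (Fin n)} = m from hidx] at hm
  obtain ⟨hmpos, hmrank⟩ := hm
  -- polynomial matrices
  set Z : Matrix (Fin n) (Fin n) (Polynomial ℝ) :=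
    (Polynomial.X : Polynomial ℝ) • (M.map Polynomial.C) + A.map Polynomial.C with hZ
  set Q : Matrix (Fin n) (Fin m × Fin r) (Polynomial ℝ) :=
    Matrix.of (fun i p => ((Z ^ (p.1 : ℕ)) * B.map Polynomial.C) i p.2) with hQ
  set P : Polynomial ℝ := (Q * Qᵀ).det with hP
  -- evaluation of Q
  have hQeval : ∀ t : ℝ, Q.map (Polynomial.eval t) = ctrbMat (t • M + A) B m := by
    intro t
    have hZmap : Z.map (Polynomial.eval t) = t • M + A := by
      ext i j
      simp only [hZ, Matrix.map_apply, Matrix.add_apply, Matrix.smul_apply, smul_eq_mul,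
        Polynomial.eval_add, Polynomial.eval_mul, Polynomial.eval_X, Polynomial.eval_C]
    ext i p
    have hpow : (Z ^ (p.1 : ℕ)).map (Polynomial.eval t) = (t • M + A) ^ (p.1 : ℕ) := by
      have := map_pow ((Polynomial.evalRingHom t).mapMatrix) Z (p.1 : ℕ)
      simp only [RingHom.mapMatrix_apply] at this
      rw [show (Polynomial.evalRingHom t : Polynomial ℝ → ℝ) = Polynomial.eval t from rfl] at this
      rw [this, hZmap]
    have hmulmap : (Z ^ (p.1 : ℕ) * B.map Polynomial.C).map (Polynomial.eval t) =
        ((Z ^ (p.1 : ℕ)).map (Polynomial.eval t)) *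
          ((B.map Polynomial.C).map (Polynomial.eval t)) :=
      Matrix.map_mul (f := Polynomial.evalRingHom t)
    have hBmap : (B.map Polynomial.C).map (Polynomial.eval t) = B := by
      ext a b
      simp [Matrix.map_apply]
    calc Q.map (Polynomial.eval t) i p
        = ((Z ^ (p.1 : ℕ) * B.map Polynomial.C).map (Polynomial.eval t)) i p.2 := rfl
      _ = ((t • M + A) ^ (p.1 : ℕ) * B) i p.2 := by rw [hmulmap, hpow, hBmap]
      _ = ctrbMat (t • M + A) B m i p := rfl
  -- evaluation of P
  have hPeval : ∀ t : ℝ,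
      P.eval t = ((ctrbMat (t • M + A) B m) * (ctrbMat (t • M + A) B m)ᵀ).det := by
    intro t
    have := RingHom.map_det (Polynomial.evalRingHom t) (Q * Qᵀ)
    rw [hP]
    rw [show Polynomial.eval t ((Q * Qᵀ).det)
        = ((Q * Qᵀ).map (Polynomial.evalRingHom t)).det from this]
    congr 1
    rw [Matrix.map_mul (f := Polynomial.evalRingHom t)]
    rw [show (Qᵀ.map (Polynomial.evalRingHom t)) = (Q.map (Polynomial.evalRingHom t))ᵀ from
      Matrix.transpose_map]
    rw [show Q.map ((Polynomial.evalRingHom t : Polynomial ℝ → ℝ)) =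
      Q.map (Polynomial.eval t) from rfl, hQeval t]
  -- P is not the zero polynomial
  have hP0 : P ≠ 0 := by
    intro h0
    have h00 : P.eval 0 = 0 := by rw [h0]; simp
    rw [hPeval 0] at h00
    have h0MA : (0 : ℝ) • M + A = A := by simp
    rw [h0MA] at h00
    have hrk : ((ctrbMat A B m) * (ctrbMat A B m)ᵀ).rank = n := by
      rw [Matrix.rank_self_mul_transpose, hmrank, Fintype.card_fin]
    exact aux_det_ne_zero_of_rank _ hrk h00
  -- finiteness
  apply Set.Finite.subset
    (Set.Finite.insert 0 (Set.Finite.preimage (Set.injOn_of_injective inv_injective)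
      (P.roots.toFinset : Set ℝ).toFinite))
  intro g hg
  simp only [Set.mem_setOf_eq] at hg
  by_contra hgood
  simp only [Set.mem_insert_iff, Set.mem_preimage, Multiset.mem_toFinset, Finset.coe_sort_coe,
    Finset.mem_coe, not_or] at hgood
  obtain ⟨hg0, hgroot⟩ := hgood
  have heval : P.eval g⁻¹ ≠ 0 := by
    intro h
    exact hgroot ((Polynomial.mem_roots hP0).mpr h)
  -- rank of ctrbMat (g⁻¹ • M + A) B m is n
  have hrank1 : (ctrbMat (g⁻¹ • M + A) B m).rank = n := by
    rw [hPeval g⁻¹] at heval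
    have := aux_rank_of_det_ne_zero _ heval
    rw [Matrix.rank_self_mul_transpose] at this
    exact this
  -- transfer to M + g • A
  have hsmul : M + g • A = g • (g⁻¹ • M + A) := by
    rw [smul_add, smul_smul, mul_inv_cancel₀ hg0, one_smul]
  have hrank2 : (ctrbMat (M + g • A) B m).rank = n := by
    rw [hsmul, aux_rank_ctrb_smul _ _ _ hg0, hrank1]
  -- conclude
  apply hg
  constructor
  · -- Controllable
    unfold Controllable
    refine le_antisymm ?_ ?_
    · simpa using (ctrbMat (M + g • A) B (Fintype.card (Fin n))).rank_le_card_height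
    · rcases Nat.eq_zero_or_pos n with h0 | hpos
      · simp [h0]
      · have hc' : (ctrbMat A B (Fintype.card (Fin n))).rank = Fintype.card (Fin n) := hc
        have hmn : m ≤ n := by
          rw [← hidx]
          refine Nat.sInf_le ⟨hpos, ?_⟩
          rw [Fintype.card_fin] at hc'
          rw [Fintype.card_fin]
          exact hc'
        have h3 := aux_rank_ctrb_mono (M + g • A) B hmn
        rw [hrank2] at h3
        rw [Fintype.card_fin]
        exact h3
  · -- index ≤ m
    unfold ctrlIndex
    exact Nat.sInf_le ⟨hmpos, by simpa [Fintype.card_fin] using hrank2⟩
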